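/- For all integers k, n, d with 0 < k < q, n ≥ 0, and d ≥ 0, the power sum S_d(k·p^n) = Σ_{a ∈ A_+, deg a = d} 1/a^{k p^n} equals 1/ℓ_d^{k p^n} in K, where ℓ_d = ∏_{i=1}^d (t − t^{q^i}). -/

import Mathlib

/-!
Setting: `F` is the finite field `𝔽_q` with `q = Fintype.card F` elements.
`A = 𝔽_q[t]` is the polynomial ring, and `K∞ = 𝔽_q((1/t))` is the completion of
`K = 𝔽_q(t)` at the infinite place.  We realize `K∞` as the Laurent series field
`LaurentSeries F = F((X))` with `t := X⁻¹`, so that `X = 1/t` is a uniformizer at `∞`.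
Monic polynomials in `t` of degree `d` are parametrized by their lower-order
coefficients `c : Fin d → F`.
-/

open Polynomial

noncomputable section

/-- `t := X⁻¹ ∈ F((X))`, so that `F((X)) = 𝔽_q((1/t)) = K∞`. -/
def tt (F : Type*) [Field F] : LaurentSeries F := HahnSeries.single (-1 : ℤ) 1

/-- The monic polynomial in `t` of degree `d` with coefficient `c i` in degree `i < d`,
evaluated at `t`, as an element of `K∞`.  As `c` ranges over `Fin d → F`, these are
exactly the monic polynomials of degree `d` in `t`. -/
def monicVal (F : Type*) [Field F] (d : ℕ) (c : Fin d → F) : LaurentSeries F :=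
  Polynomial.aeval (tt F) (X ^ d + ∑ i : Fin d, C (c i) * X ^ (i : ℕ))

/-- The power sum `S_d(s) = ∑_{a ∈ A₊, deg a = d} 1/aˢ ∈ K ⊆ K∞`. -/
def S (F : Type*) [Field F] [Fintype F] (d s : ℕ) : LaurentSeries F :=
  ∑ c : Fin d → F, (monicVal F d c ^ s)⁻¹

/-- The Carlitz zeta value `ζ(s) = ∑_{d ≥ 0} S_d(s) ∈ K∞`. -/
def zeta (F : Type*) [Field F] [Fintype F] (s : ℕ) : LaurentSeries F :=
  ∑' d : ℕ, S F d s

/-- The multizeta value `ζ(s₁, …, s_r) = ∑_{d₁ > d₂ > ⋯ > d_r ≥ 0} S_{d₁}(s₁)⋯S_{d_r}(s_r)`. -/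
def multizeta (F : Type*) [Field F] [Fintype F] {r : ℕ} (s : Fin r → ℕ) : LaurentSeries F :=
  ∑' d : {d : Fin r → ℕ // ∀ i j : Fin r, i < j → d j < d i},
    ∏ i : Fin r, S F (d.1 i) (s i)

/-- The (possibly degenerate) multizeta value `ζ_ρ(s)` attached to a linear preorder `ρ`
on `{1, …, r}`: the sum of `S_{d₁}(s₁)⋯S_{d_r}(s_r)` over all tuples `d` such that
`d i ≤ d j ↔ i ρ j` for all `i, j`. -/
def zetaRho (F : Type*) [Field F] [Fintype F] {r : ℕ} (ρ : Fin r → Fin r → Prop)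
    (s : Fin r → ℕ) : LaurentSeries F :=
  ∑' d : {d : Fin r → ℕ // ∀ i j : Fin r, d i ≤ d j ↔ ρ i j},
    ∏ i : Fin r, S F (d.1 i) (s i)

/-- `ℓ_d = ∏_{i=1}^d (t - t^{qⁱ}) ∈ A` (with `ℓ_0 = 1`), viewed in `K∞`. -/
def ell (F : Type*) [Field F] [Fintype F] (d : ℕ) : LaurentSeries F :=
  ∏ i ∈ Finset.Icc 1 d, (tt F - tt F ^ (Fintype.card F ^ i))


section PolyIdent

variable {F : Type*} [Field F] [Fintype F] [DecidableEq F]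

lemma prod_X_sub_C_univ (F : Type*) [Field F] [Fintype F] :
    ∏ a : F, (X - C a) = X ^ Fintype.card F - X := by
  have hm : (X ^ Fintype.card F - X : F[X]).Monic := by
    apply (monic_X_pow _).sub_of_left
    rw [degree_X_pow, degree_X]
    exact_mod_cast Fintype.one_lt_card
  have h2 := FiniteField.roots_X_pow_card_sub_X F
  have h3 : (X ^ Fintype.card F - X : F[X]).roots.card =
      (X ^ Fintype.card F - X : F[X]).natDegree := by
    rw [h2, FiniteField.X_pow_card_sub_X_natDegree_eq F Fintype.one_lt_card]
    simp
  have h4 := prod_multiset_X_sub_C_of_monic_of_roots_card_eq hm h3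
  rw [h2] at h4
  rw [Finset.prod_eq_multiset_prod]
  exact h4

lemma erase_prod_eq (α : F) :
    ∏ η ∈ Finset.univ.erase α, (X - C η) = (X - C α) ^ (Fintype.card F - 1) - 1 := by
  have huniv : ∏ η : F, (X - C η) = (X - C α) ^ Fintype.card F - (X - C α) := by
    have h1 : ∏ η : F, (X - C η) = ∏ β : F, ((X - C α) - C β) :=
      (Fintype.prod_equiv (Equiv.addLeft α) (fun β => (X - C α) - C β) (fun η => X - C η)
        (fun β => by simp only [Equiv.coe_addLeft, map_add]; ring)).symm
    rw [h1]
    calc ∏ β : F, ((X - C α) - C β) = aeval (X - C α) (∏ β : F, (X - C β)) := by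
          rw [map_prod]; simp
      _ = (X - C α) ^ Fintype.card F - (X - C α) := by rw [prod_X_sub_C_univ F]; simp
  have hq1 : (Fintype.card F - 1) + 1 = Fintype.card F :=
    Nat.succ_pred_eq_of_pos Fintype.card_pos
  have hcancel : (X - C α) * ∏ η ∈ Finset.univ.erase α, (X - C η)
      = (X - C α) * ((X - C α) ^ (Fintype.card F - 1) - 1) := by
    have hpow : (X - C α) ^ Fintype.card F
        = (X - C α) ^ (Fintype.card F - 1) * (X - C α) := by
      conv_lhs => rw [← hq1]
      rw [pow_succ]
    rw [Finset.mul_prod_erase Finset.univ (fun η => (X - C η : F[X])) (Finset.mem_univ α),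
      huniv, hpow]
    ring
  exact mul_left_cancel₀ (X_sub_C_ne_zero α) hcancel

lemma polyA (F : Type*) [Field F] [Fintype F] [DecidableEq F] {k : ℕ} (hk : 0 < k)
    (hk' : k < Fintype.card F) :
    ∑ θ : F, ∏ η ∈ Finset.univ.erase θ, (X - C η) ^ k = C ((-1 : F) ^ k) := by
  set q := Fintype.card F with hqdef
  rw [← sub_eq_zero]
  set D : F[X] := (∑ θ : F, ∏ η ∈ Finset.univ.erase θ, (X - C η) ^ k) - C ((-1 : F) ^ k)
    with hD
  have hdvd : ∀ α : F, (X - C α) ^ k ∣ D := by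
    intro α
    have hsplit : D = (∏ η ∈ Finset.univ.erase α, (X - C η) ^ k - C ((-1 : F) ^ k))
        + ∑ θ ∈ Finset.univ.erase α, ∏ η ∈ Finset.univ.erase θ, (X - C η) ^ k := by
      rw [hD, ← Finset.add_sum_erase _ _ (Finset.mem_univ α)]
      ring
    rw [hsplit]
    apply dvd_add
    · rw [Finset.prod_pow, erase_prod_eq α]
      have hC : (C ((-1 : F) ^ k) : F[X]) = (-1 : F[X]) ^ k := by
        rw [map_pow, map_neg, map_one]
      rw [hC]
      have h1 : ((X - C α) ^ (q - 1) - 1) - (-1) ∣ ((X - C α) ^ (q - 1) - 1) ^ k - (-1) ^ k :=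
        sub_dvd_pow_sub_pow _ _ k
      have h2 : ((X - C α) ^ (q - 1) - 1) - (-1) = (X - C α) ^ (q - 1) := by ring
      rw [h2] at h1
      exact dvd_trans (pow_dvd_pow _ (by omega : k ≤ q - 1)) h1
    · apply Finset.dvd_sum
      intro θ hθ
      apply Finset.dvd_prod_of_mem (fun η => (X - C η) ^ k)
      rw [Finset.mem_erase] at hθ ⊢
      exact ⟨fun h => hθ.1 h.symm, Finset.mem_univ α⟩
  have hprod : ∏ α : F, (X - C α) ^ k ∣ D := by
    apply Finset.prod_dvd_of_coprime
    · intro a _ b hb hab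
      exact ((Polynomial.pairwise_coprime_X_sub_C (fun x y h => h) hab).pow)
    · intro a _
      exact hdvd a
  by_contra hD0
  have hdeg1 : (∏ α : F, (X - C α) ^ k).natDegree ≤ D.natDegree :=
    Polynomial.natDegree_le_of_dvd hprod hD0
  have hdeg2 : (∏ α : F, (X - C α) ^ k).natDegree = k * q := by
    rw [Finset.prod_pow, Polynomial.natDegree_pow, prod_X_sub_C_univ F,
      FiniteField.X_pow_card_sub_X_natDegree_eq F Fintype.one_lt_card]
  have hterm : ∀ θ : F, (∏ η ∈ Finset.univ.erase θ, (X - C η) ^ k).natDegree ≤ (q - 1) * k := by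
    intro θ
    refine le_trans (Polynomial.natDegree_prod_le _ _) (le_of_eq ?_)
    calc ∑ η ∈ Finset.univ.erase θ, ((X - C η) ^ k).natDegree
        = ∑ _η ∈ Finset.univ.erase θ, k := by
          refine Finset.sum_congr rfl fun η _ => ?_
          rw [natDegree_pow, natDegree_X_sub_C, mul_one]
      _ = (q - 1) * k := by
          rw [Finset.sum_const, Finset.card_erase_of_mem (Finset.mem_univ θ),
            Finset.card_univ, smul_eq_mul]
  have hdeg3 : D.natDegree ≤ (q - 1) * k := by
    refine le_trans (Polynomial.natDegree_sub_le _ _) ?_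
    rw [natDegree_C]
    refine max_le (Polynomial.natDegree_sum_le_of_forall_le _ _ fun θ _ => hterm θ) (by positivity)
  have h2q : 2 ≤ q := Fintype.one_lt_card
  have : k * q ≤ (q - 1) * k := le_trans (hdeg2 ▸ hdeg1) hdeg3
  nlinarith [Nat.sub_add_cancel (le_trans one_le_two h2q)]

end PolyIdent
section ClaimA

variable {F : Type*} [Field F] [Fintype F] [DecidableEq F]

lemma claimA {L : Type*} [Field L] [Algebra F L] {k : ℕ} (hk : 0 < k)
    (hk' : k < Fintype.card F) (x : L)
    (hx : ∀ θ : F, x - algebraMap F L θ ≠ 0) :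
    ∑ θ : F, ((x - algebraMap F L θ) ^ k)⁻¹ = ((x - x ^ Fintype.card F) ^ k)⁻¹ := by
  set q := Fintype.card F with hqdef
  set ι := algebraMap F L with hι
  have hprod : ∏ η : F, (x - ι η) = x ^ q - x := by
    have h := congrArg (aeval x) (prod_X_sub_C_univ F)
    simpa using h
  have hPne : (x ^ q - x) ≠ 0 := by
    rw [← hprod]
    exact Finset.prod_ne_zero_iff.mpr fun η _ => hx η
  have hkey : ∑ θ : F, ∏ η ∈ Finset.univ.erase θ, (x - ι η) ^ k = (-1 : L) ^ k := by
    have h := congrArg (aeval x) (polyA F hk hk')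
    simpa using h
  have hterm : ∀ θ : F, ((x - ι θ) ^ k)⁻¹
      = (∏ η ∈ Finset.univ.erase θ, (x - ι η) ^ k) * ((x ^ q - x) ^ k)⁻¹ := by
    intro θ
    have h1 : (x - ι θ) * ∏ η ∈ Finset.univ.erase θ, (x - ι η) = x ^ q - x := by
      rw [Finset.mul_prod_erase Finset.univ (fun η => x - ι η) (Finset.mem_univ θ), hprod]
    have h2 : ∏ η ∈ Finset.univ.erase θ, (x - ι η) ≠ 0 :=
      Finset.prod_ne_zero_iff.mpr fun η _ => hx η
    rw [Finset.prod_pow, ← h1, mul_pow, mul_inv]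
    rw [mul_comm (((x - ι θ) ^ k)⁻¹) _, ← mul_assoc, mul_inv_cancel₀ (pow_ne_zero _ h2), one_mul]
  calc ∑ θ : F, ((x - ι θ) ^ k)⁻¹
      = (∑ θ : F, ∏ η ∈ Finset.univ.erase θ, (x - ι η) ^ k) * ((x ^ q - x) ^ k)⁻¹ := by
        rw [Finset.sum_mul]
        exact Finset.sum_congr rfl fun θ _ => hterm θ
    _ = (-1 : L) ^ k * ((x ^ q - x) ^ k)⁻¹ := by rw [hkey]
    _ = ((x - x ^ q) ^ k)⁻¹ := by
        have h3 : (x - x ^ q) ^ k = (-1 : L) ^ k * (x ^ q - x) ^ k := by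
          rw [← mul_pow]
          ring_nf
        rw [h3, mul_inv]
        have h4 : ((-1 : L) ^ k)⁻¹ = (-1 : L) ^ k := by
          rcases Nat.even_or_odd k with he | ho
          · rw [he.neg_one_pow]; exact inv_one
          · rw [ho.neg_one_pow]; rw [inv_neg, inv_one]
        rw [h4]

end ClaimA

section Hcomp

variable {L : Type*} [CommRing L]

/-- Complete homogeneous "symmetric function" of a list, defined by the recursion
`h_{i+1}(x :: xs) = x * h_i (x :: xs) + h_{i+1} xs`. -/
def hcomp : ℕ → List L → L
  | 0, _ => 1
  | _ + 1, [] => 0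
  | i + 1, x :: xs => x * hcomp i (x :: xs) + hcomp (i + 1) xs
termination_by i xs => (i, xs.length)

@[simp] lemma hcomp_zero (xs : List L) : hcomp 0 xs = 1 := by
  unfold hcomp; rfl

@[simp] lemma hcomp_nil (i : ℕ) : hcomp (i + 1) ([] : List L) = 0 := by
  unfold hcomp; rfl

lemma hcomp_cons (i : ℕ) (x : L) (xs : List L) :
    hcomp (i + 1) (x :: xs) = x * hcomp i (x :: xs) + hcomp (i + 1) xs := by
  rw [hcomp]

lemma hcomp_concat : ∀ (i : ℕ) (xs : List L) (y : L),
    hcomp (i + 1) (xs ++ [y]) = y * hcomp i (xs ++ [y]) + hcomp (i + 1) xs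
  | i, [], y => by simp [hcomp_cons]
  | 0, x :: xs, y => by
    simp only [List.cons_append, hcomp_cons, hcomp_zero, mul_one]
    rw [hcomp_concat 0 xs y]
    simp only [hcomp_zero, mul_one]
    ring
  | i + 1, x :: xs, y => by
    have h1 := hcomp_concat i (x :: xs) y
    have h2 := hcomp_concat (i + 1) xs y
    simp only [List.cons_append] at h1 ⊢
    calc hcomp (i + 1 + 1) (x :: (xs ++ [y]))
        = x * hcomp (i + 1) (x :: (xs ++ [y])) + hcomp (i + 1 + 1) (xs ++ [y]) :=
          hcomp_cons _ _ _
      _ = x * (y * hcomp i (x :: (xs ++ [y])) + hcomp (i + 1) (x :: xs))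
          + (y * hcomp (i + 1) (xs ++ [y]) + hcomp (i + 1 + 1) xs) := by rw [h1, h2]
      _ = y * (x * hcomp i (x :: (xs ++ [y])) + hcomp (i + 1) (xs ++ [y]))
          + (x * hcomp (i + 1) (x :: xs) + hcomp (i + 1 + 1) xs) := by ring
      _ = y * hcomp (i + 1) (x :: (xs ++ [y])) + hcomp (i + 1 + 1) (x :: xs) := by
          rw [hcomp_cons (i) x (xs ++ [y]), hcomp_cons (i+1) x xs]
termination_by i xs => (i, xs.length)

lemma hcomp_map {M : Type*} [CommRing M] (ψ : L →+* M) :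
    ∀ (i : ℕ) (xs : List L), ψ (hcomp i xs) = hcomp i (xs.map ψ)
  | 0, xs => by simp
  | i + 1, [] => by simp
  | i + 1, x :: xs => by
    rw [hcomp_cons, map_add, map_mul, hcomp_map ψ i (x :: xs), hcomp_map ψ (i + 1) xs,
      List.map_cons, hcomp_cons]
termination_by i xs => (i, xs.length)

end Hcomp
section XelSection

variable {F : Type*} [Field F] [Fintype F]

lemma tt_pow (F : Type*) [Field F] (e : ℕ) :
    tt F ^ e = HahnSeries.single (-(e : ℤ)) 1 := by
  rw [tt, HahnSeries.single_pow]
  norm_num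

lemma tt_pow_mul_coeff (e : ℕ) (x : LaurentSeries F) (z : ℤ) :
    (tt F ^ e * x).coeff z = x.coeff (z + e) := by
  rw [tt_pow]
  have h := HahnSeries.coeff_single_mul_add (r := (1 : F)) (x := x)
    (a := z + e) (b := -(e : ℤ))
  rw [one_mul] at h
  convert h using 2
  ring

lemma algC_mul_coeff (γ : F) (x : LaurentSeries F) (z : ℤ) :
    (algebraMap F (LaurentSeries F) γ * x).coeff z = γ * x.coeff z := by
  have ha : algebraMap F (LaurentSeries F) γ = HahnSeries.single (0 : ℤ) γ := by
    rw [HahnSeries.algebraMap_apply', PowerSeries.algebraMap_apply]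
    simp [HahnSeries.ofPowerSeries_C, HahnSeries.C_apply]
  rw [ha]
  have h := HahnSeries.coeff_single_mul_add (r := γ) (x := x) (a := z) (b := (0 : ℤ))
  simpa using h

/-- The list of variables `t, t^q, …, t^{q^{m-1}}`. -/
def xsL (F : Type*) [Field F] [Fintype F] (m : ℕ) : List (LaurentSeries F) :=
  (List.range m).map fun j => tt F ^ Fintype.card F ^ j

lemma xsL_succ_concat (m : ℕ) :
    xsL F (m + 1) = xsL F m ++ [tt F ^ Fintype.card F ^ m] := by
  rw [xsL, List.range_succ, List.map_append, List.map_singleton]; rfl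

lemma xsL_one : xsL F 1 = [tt F] := by
  simp [xsL, List.range_succ]

lemma hcomp_xsL_one : ∀ i : ℕ, hcomp i (xsL F 1) = tt F ^ i
  | 0 => by simp
  | i + 1 => by
    rw [xsL_one, hcomp_cons, hcomp_nil, ← xsL_one, hcomp_xsL_one i, add_zero, pow_succ]
    ring

lemma xsL_map_pow_q (m : ℕ) :
    (xsL F m).map (fun z : LaurentSeries F => z ^ Fintype.card F)
      = (List.range m).map fun j => tt F ^ Fintype.card F ^ (j + 1) := by
  rw [xsL, List.map_map]
  refine List.map_congr_left fun j _ => ?_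
  simp only [Function.comp_apply, ← pow_mul, ← pow_succ]

lemma xsL_succ_cons (m : ℕ) :
    xsL F (m + 1) = tt F ::
      ((xsL F m).map fun z : LaurentSeries F => z ^ Fintype.card F) := by
  rw [xsL_map_pow_q, xsL, List.range_succ_eq_map, List.map_cons, List.map_map]
  congr 1
  rw [pow_zero, pow_one]

end XelSection
section Main

variable {F : Type*} [Field F] [Fintype F]

/-- The element `h_d(x₁,…,x_m) + ∑_{i<d} c_i h_i(x₁,…,x_m)` with `x_j = t^{q^{j-1}}`. -/
def Xel (F : Type*) [Field F] [Fintype F] (m d : ℕ) (c : Fin d → F) : LaurentSeries F :=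
  hcomp d (xsL F m) +
    ∑ i : Fin d, algebraMap F (LaurentSeries F) (c i) * hcomp (i : ℕ) (xsL F m)

lemma hcomp_coeff (m : ℕ) : ∀ i : ℕ,
    (hcomp i (xsL F (m + 1))).coeff (-((i * Fintype.card F ^ m : ℕ) : ℤ)) = 1 ∧
      ∀ z : ℤ, z < -((i * Fintype.card F ^ m : ℕ) : ℤ) →
        (hcomp i (xsL F (m + 1))).coeff z = 0 := by
  induction m with
  | zero =>
    intro i
    rw [hcomp_xsL_one i, tt_pow]
    constructor
    · rw [show ((i * Fintype.card F ^ 0 : ℕ) : ℤ) = (i : ℤ) by push_cast; ring]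
      exact HahnSeries.coeff_single_same _ _
    · intro z hz
      apply HahnSeries.coeff_single_of_ne
      rw [show ((i * Fintype.card F ^ 0 : ℕ) : ℤ) = (i : ℤ) by push_cast; ring] at hz
      omega
  | succ m ihm =>
    intro i
    induction i with
    | zero =>
      constructor
      · rw [hcomp_zero, ← HahnSeries.single_zero_one]
        simpa using HahnSeries.coeff_single_same (0 : ℤ) (1 : F)
      · intro z hz
        rw [hcomp_zero, ← HahnSeries.single_zero_one]
        apply HahnSeries.coeff_single_of_ne
        simp only [Nat.zero_mul, Nat.cast_zero, neg_zero] at hz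
        omega
    | succ i ihi =>
      have e3 : hcomp (i + 1) (xsL F (m + 2))
          = tt F ^ (Fintype.card F ^ (m + 1)) * hcomp i (xsL F (m + 2))
            + hcomp (i + 1) (xsL F (m + 1)) := by
        conv_lhs => rw [xsL_succ_concat (m + 1)]
        rw [hcomp_concat, ← xsL_succ_concat (m + 1)]
      have hqpos : 0 < Fintype.card F ^ (m + 1) := pow_pos Fintype.card_pos _
      have hqmono : Fintype.card F ^ m < Fintype.card F ^ (m + 1) :=
        Nat.pow_lt_pow_succ Fintype.one_lt_card
      constructor
      · rw [e3, HahnSeries.coeff_add, tt_pow_mul_coeff]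
        have h1 : -(((i + 1) * Fintype.card F ^ (m + 1) : ℕ) : ℤ) + (Fintype.card F ^ (m + 1) : ℕ)
            = -((i * Fintype.card F ^ (m + 1) : ℕ) : ℤ) := by push_cast; ring
        rw [h1, (ihi).1]
        have h2 : -(((i + 1) * Fintype.card F ^ (m + 1) : ℕ) : ℤ)
            < -(((i + 1) * Fintype.card F ^ m : ℕ) : ℤ) := by
          have : (i + 1) * Fintype.card F ^ m < (i + 1) * Fintype.card F ^ (m + 1) :=
            mul_lt_mul_of_pos_left hqmono (Nat.succ_pos i)
          exact_mod_cast neg_lt_neg (by exact_mod_cast this)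
        rw [(ihm (i + 1)).2 _ h2, add_zero]
      · intro z hz
        rw [e3, HahnSeries.coeff_add, tt_pow_mul_coeff]
        have h1 : z + (Fintype.card F ^ (m + 1) : ℕ) < -((i * Fintype.card F ^ (m + 1) : ℕ) : ℤ) := by
          push_cast at hz ⊢
          linarith
        rw [(ihi).2 _ h1]
        have h2 : z < -(((i + 1) * Fintype.card F ^ m : ℕ) : ℤ) := by
          have hle : ((i + 1) * Fintype.card F ^ m : ℕ) ≤ ((i + 1) * Fintype.card F ^ (m + 1) : ℕ) :=
            Nat.mul_le_mul_left _ hqmono.le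
          push_cast at hz ⊢
          have : ((i + 1 : ℕ) : ℤ) * (Fintype.card F ^ m : ℕ) ≤
              ((i + 1 : ℕ) : ℤ) * (Fintype.card F ^ (m + 1) : ℕ) := by exact_mod_cast hle
          push_cast at this
          linarith
        rw [(ihm (i + 1)).2 _ h2, add_zero]

lemma Xel_ne (m d : ℕ) (c : Fin d → F) : Xel F (m + 1) d c ≠ 0 := by
  intro h0
  have hcf := hcomp_coeff (F := F) m
  set z₀ : ℤ := -((d * Fintype.card F ^ m : ℕ) : ℤ) with hz₀
  have h1 : (Xel F (m + 1) d c).coeff z₀ = 1 := by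
    rw [Xel, HahnSeries.coeff_add]
    have hsum : (∑ i : Fin d,
        algebraMap F (LaurentSeries F) (c i) * hcomp (i : ℕ) (xsL F (m + 1))).coeff z₀ = 0 := by
      have hmap := map_sum (HahnSeries.coeff.addMonoidHom z₀)
        (fun i : Fin d => algebraMap F (LaurentSeries F) (c i) * hcomp (i : ℕ) (xsL F (m + 1)))
        Finset.univ
      simp only [HahnSeries.coeff.addMonoidHom_apply] at hmap
      rw [hmap]
      refine Finset.sum_eq_zero fun i _ => ?_
      rw [algC_mul_coeff]
      have hlt : z₀ < -(((i : ℕ) * Fintype.card F ^ m : ℕ) : ℤ) := by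
        have : (i : ℕ) * Fintype.card F ^ m < d * Fintype.card F ^ m :=
          mul_lt_mul_of_pos_right i.isLt (pow_pos Fintype.card_pos m)
        rw [hz₀]
        exact_mod_cast neg_lt_neg (by exact_mod_cast this)
      rw [(hcf (i : ℕ)).2 _ hlt, mul_zero]
    rw [hsum, (hcf d).1, add_zero]
  rw [h0, HahnSeries.coeff_zero] at h1
  exact one_ne_zero h1.symm

lemma hsub (p f : ℕ) (hp : p.Prime) (hq : Fintype.card F = p ^ f) [CharP F p] (m i : ℕ) :
    hcomp (i + 1) (xsL F m) - (hcomp (i + 1) (xsL F m)) ^ Fintype.card F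
      = (tt F - tt F ^ (Fintype.card F ^ m)) * hcomp i (xsL F (m + 1)) := by
  haveI : CharP (LaurentSeries F) p :=
    charP_of_injective_algebraMap (algebraMap F (LaurentSeries F)).injective p
  haveI := Fact.mk hp
  set ψ := iterateFrobenius (LaurentSeries F) p f with hψdef
  have hψ : ∀ x : LaurentSeries F, ψ x = x ^ Fintype.card F := fun x => by
    rw [hψdef, iterateFrobenius_def, hq]
  have e1 : (hcomp (i + 1) (xsL F m)) ^ Fintype.card F
      = hcomp (i + 1) ((xsL F m).map fun z : LaurentSeries F => z ^ Fintype.card F) := by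
    rw [← hψ, hcomp_map ψ]
    congr 1
    exact List.map_congr_left fun x _ => hψ x
  have e2 : hcomp (i + 1) (xsL F (m + 1))
      = tt F * hcomp i (xsL F (m + 1))
        + hcomp (i + 1) ((xsL F m).map fun z : LaurentSeries F => z ^ Fintype.card F) := by
    conv_lhs => rw [xsL_succ_cons m]
    rw [hcomp_cons, ← xsL_succ_cons m]
  have e3 : hcomp (i + 1) (xsL F (m + 1))
      = tt F ^ (Fintype.card F ^ m) * hcomp i (xsL F (m + 1)) + hcomp (i + 1) (xsL F m) := by
    conv_lhs => rw [xsL_succ_concat m]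
    rw [hcomp_concat, ← xsL_succ_concat m]
  rw [e1]
  linear_combination e2 - e3

end Main
section Final

variable {F : Type*} [Field F] [Fintype F]

lemma keyG (p f : ℕ) (hp : p.Prime) (hq : Fintype.card F = p ^ f) [CharP F p]
    {k : ℕ} (hk : 0 < k) (hk' : k < Fintype.card F) :
    ∀ (d m : ℕ),
      ∑ c : Fin d → F, ((Xel F (m + 1) d c) ^ k)⁻¹
        = ((∏ j ∈ Finset.range d, (tt F - tt F ^ (Fintype.card F ^ (m + 1 + j)))) ^ k)⁻¹
  | 0, m => by
    simp [Xel]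
  | d + 1, m => by
    classical
    haveI : CharP (LaurentSeries F) p :=
      charP_of_injective_algebraMap (algebraMap F (LaurentSeries F)).injective p
    haveI := Fact.mk hp
    set ι := algebraMap F (LaurentSeries F) with hιdef
    have hXel : ∀ (θ : F) (c' : Fin d → F),
        Xel F (m + 1) (d + 1) (Fin.cons θ c')
          = (hcomp (d + 1) (xsL F (m + 1))
              + ∑ i : Fin d, ι (c' i) * hcomp ((i : ℕ) + 1) (xsL F (m + 1))) + ι θ := by
      intro θ c'
      rw [Xel, Fin.sum_univ_succ]
      simp only [Fin.cons_zero, Fin.cons_succ, Fin.val_zero, Fin.val_succ, hcomp_zero, mul_one]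
      ring
    have key : ∀ c' : Fin d → F,
        ∑ θ : F, ((Xel F (m + 1) (d + 1) (Fin.cons θ c')) ^ k)⁻¹
          = ((tt F - tt F ^ (Fintype.card F ^ (m + 1))) ^ k)⁻¹
            * ((Xel F (m + 2) d c') ^ k)⁻¹ := by
      intro c'
      set W := hcomp (d + 1) (xsL F (m + 1))
        + ∑ i : Fin d, ι (c' i) * hcomp ((i : ℕ) + 1) (xsL F (m + 1)) with hWdef
      have h1 : ∀ θ : F, Xel F (m + 1) (d + 1) (Fin.cons θ c') = W + ι θ := fun θ => hXel θ c'
      have hne : ∀ θ : F, W - ι θ ≠ 0 := by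
        intro θ
        have h2 := Xel_ne (F := F) m (d + 1) (Fin.cons (-θ) c')
        rw [h1 (-θ), map_neg] at h2
        rw [sub_eq_add_neg]
        exact h2
      have hWq : W ^ Fintype.card F
          = (hcomp (d + 1) (xsL F (m + 1))) ^ Fintype.card F
            + ∑ i : Fin d, ι (c' i) * (hcomp ((i : ℕ) + 1) (xsL F (m + 1))) ^ Fintype.card F := by
        rw [hWdef, hq, add_pow_char_pow, sum_pow_char_pow]
        congr 1
        refine Finset.sum_congr rfl fun i _ => ?_
        rw [mul_pow, ← map_pow, ← hq, FiniteField.pow_card]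
      have hWsub : W - W ^ Fintype.card F
          = (tt F - tt F ^ (Fintype.card F ^ (m + 1))) * Xel F (m + 2) d c' := by
        calc W - W ^ Fintype.card F
            = (hcomp (d + 1) (xsL F (m + 1)) - (hcomp (d + 1) (xsL F (m + 1))) ^ Fintype.card F)
              + ∑ i : Fin d, ι (c' i) * (hcomp ((i : ℕ) + 1) (xsL F (m + 1))
                  - (hcomp ((i : ℕ) + 1) (xsL F (m + 1))) ^ Fintype.card F) := by
              rw [hWq, hWdef]
              simp only [mul_sub]
              rw [Finset.sum_sub_distrib]
              ring
          _ = (tt F - tt F ^ (Fintype.card F ^ (m + 1))) * hcomp d (xsL F (m + 2))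
              + ∑ i : Fin d, ι (c' i) * ((tt F - tt F ^ (Fintype.card F ^ (m + 1)))
                  * hcomp (i : ℕ) (xsL F (m + 2))) := by
              rw [hsub p f hp hq (m + 1) d]
              congr 1
              exact Finset.sum_congr rfl fun i _ => by rw [hsub p f hp hq (m + 1) (i : ℕ)]
          _ = (tt F - tt F ^ (Fintype.card F ^ (m + 1)))
              * (hcomp d (xsL F (m + 2)) + ∑ i : Fin d, ι (c' i) * hcomp (i : ℕ) (xsL F (m + 2))) := by
              rw [mul_add, Finset.mul_sum]
              congr 1
              exact Finset.sum_congr rfl fun i _ => by ring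
          _ = (tt F - tt F ^ (Fintype.card F ^ (m + 1))) * Xel F (m + 2) d c' := by rw [Xel]
      calc ∑ θ : F, ((Xel F (m + 1) (d + 1) (Fin.cons θ c')) ^ k)⁻¹
          = ∑ θ : F, ((W + ι θ) ^ k)⁻¹ := Finset.sum_congr rfl fun θ _ => by rw [h1 θ]
        _ = ∑ θ : F, ((W - ι θ) ^ k)⁻¹ :=
            Fintype.sum_equiv (Equiv.neg F) _ _ fun θ => by
              rw [Equiv.neg_apply, map_neg, sub_neg_eq_add]
        _ = ((W - W ^ Fintype.card F) ^ k)⁻¹ := claimA hk hk' W hne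
        _ = ((tt F - tt F ^ (Fintype.card F ^ (m + 1))) ^ k)⁻¹ * ((Xel F (m + 2) d c') ^ k)⁻¹ := by
            rw [hWsub, mul_pow, mul_inv]
    calc ∑ c : Fin (d + 1) → F, ((Xel F (m + 1) (d + 1) c) ^ k)⁻¹
        = ∑ y : F × (Fin d → F), ((Xel F (m + 1) (d + 1) (Fin.cons y.1 y.2)) ^ k)⁻¹ := by
          rw [← (Fin.consEquiv fun _ : Fin (d + 1) => F).sum_comp
            fun c => ((Xel F (m + 1) (d + 1) c) ^ k)⁻¹]
          rfl
      _ = ∑ θ : F, ∑ c' : Fin d → F, ((Xel F (m + 1) (d + 1) (Fin.cons θ c')) ^ k)⁻¹ := by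
          rw [Fintype.sum_prod_type]
      _ = ∑ c' : Fin d → F, ∑ θ : F, ((Xel F (m + 1) (d + 1) (Fin.cons θ c')) ^ k)⁻¹ :=
          Finset.sum_comm
      _ = ∑ c' : Fin d → F, ((tt F - tt F ^ (Fintype.card F ^ (m + 1))) ^ k)⁻¹
            * ((Xel F (m + 2) d c') ^ k)⁻¹ := Finset.sum_congr rfl fun c' _ => key c'
      _ = ((tt F - tt F ^ (Fintype.card F ^ (m + 1))) ^ k)⁻¹
            * ∑ c' : Fin d → F, ((Xel F (m + 2) d c') ^ k)⁻¹ := by rw [Finset.mul_sum]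
      _ = ((tt F - tt F ^ (Fintype.card F ^ (m + 1))) ^ k)⁻¹
            * ((∏ j ∈ Finset.range d, (tt F - tt F ^ (Fintype.card F ^ (m + 1 + 1 + j)))) ^ k)⁻¹ := by
          rw [keyG p f hp hq hk hk' d (m + 1)]
      _ = ((∏ j ∈ Finset.range (d + 1), (tt F - tt F ^ (Fintype.card F ^ (m + 1 + j)))) ^ k)⁻¹ := by
          have hprodeq : (∏ j ∈ Finset.range (d + 1), (tt F - tt F ^ (Fintype.card F ^ (m + 1 + j))))
              = (tt F - tt F ^ (Fintype.card F ^ (m + 1)))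
                * ∏ j ∈ Finset.range d, (tt F - tt F ^ (Fintype.card F ^ (m + 1 + 1 + j))) := by
            rw [Finset.prod_range_succ', mul_comm]
            congr 1
            exact Finset.prod_congr rfl fun j _ =>
              by rw [show m + 1 + (j + 1) = m + 1 + 1 + j from by omega]
          rw [hprodeq, mul_pow, mul_inv]

lemma ell_eq (d : ℕ) :
    ∏ j ∈ Finset.range d, (tt F - tt F ^ (Fintype.card F ^ (0 + 1 + j))) = ell F d := by
  rw [ell]
  induction d with
  | zero => simp
  | succ d ih =>
    rw [Finset.prod_range_succ, Finset.prod_Icc_succ_top (by omega : 1 ≤ d + 1), ih,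
      show 0 + 1 + d = d + 1 from by omega]

lemma monicVal_eq_Xel (d : ℕ) (c : Fin d → F) : monicVal F d c = Xel F 1 d c := by
  rw [monicVal, Xel, map_add, map_pow, aeval_X, map_sum, hcomp_xsL_one d]
  congr 1
  refine Finset.sum_congr rfl fun i _ => ?_
  rw [hcomp_xsL_one (i : ℕ), map_mul, map_pow, aeval_X, aeval_C]

end Final
/-- For all integers `k, n, d` with `0 < k < q`, `n ≥ 0`, `d ≥ 0`,
the power sum `S_d(k·pⁿ)` equals `1/ℓ_d^{k·pⁿ}`. -/
theorem S_eq_inv_ell_pow (F : Type*) [Field F] [Fintype F] (p : ℕ) (hp : p.Prime) [CharP F p]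
    (k n d : ℕ) (hk : 0 < k) (hk' : k < Fintype.card F) :
    S F d (k * p ^ n) = (ell F d ^ (k * p ^ n))⁻¹ := by
  classical
  obtain ⟨fdeg, hpp, hcard⟩ := FiniteField.card F p
  haveI : CharP (LaurentSeries F) p :=
    charP_of_injective_algebraMap (algebraMap F (LaurentSeries F)).injective p
  haveI := Fact.mk hp
  have core : S F d k = ((ell F d) ^ k)⁻¹ := by
    rw [S]
    calc ∑ c : Fin d → F, ((monicVal F d c) ^ k)⁻¹
        = ∑ c : Fin d → F, ((Xel F 1 d c) ^ k)⁻¹ :=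
          Finset.sum_congr rfl fun c _ => by rw [monicVal_eq_Xel]
      _ = ((∏ j ∈ Finset.range d, (tt F - tt F ^ (Fintype.card F ^ (0 + 1 + j)))) ^ k)⁻¹ :=
          keyG p (fdeg : ℕ) hp hcard hk hk' d 0
      _ = ((ell F d) ^ k)⁻¹ := by rw [ell_eq]
  have hS : S F d (k * p ^ n) = (S F d k) ^ (p ^ n) := by
    rw [S, S, sum_pow_char_pow]
    refine Finset.sum_congr rfl fun c _ => ?_
    rw [inv_pow, ← pow_mul]
  rw [hS, core, inv_pow, ← pow_mul]
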